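/- Let γ₀ : I → ℂ∖{0} be a regular twice-differentiable curve satisfying the soliton equation κ₀ − γ₀⊥/|γ₀|² = λ·γ₀⊥ for a constant λ ∈ ℝ. Define γ(s,t) := √(1 + 2λt)·γ₀(s) for all t with 1 + 2λt > 0. Then γ solves the equivariant Lagrangian mean curvature flow equation up to tangential motion: the projection of ∂γ/∂t orthogonal to the tangent direction γ_s equals κ − γ⊥/|γ|², where κ and γ⊥ are computed from γ(·,t). (For λ > 0 this gives Anciaux's self-expanders, for λ < 0 self-shrinkers.) -/

import Mathlib

/-- The curvature vector of a regular curve `γ : ℝ → ℂ`: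
`κ = |γ_s|⁻²·(γ_ss − |γ_s|⁻²·⟨γ_ss,γ_s⟩·γ_s)` with `⟨a,b⟩ = Re(a·conj b)`. -/
noncomputable def curvVec (γ : ℝ → ℂ) (s : ℝ) : ℂ :=
  (Complex.normSq (deriv γ s))⁻¹ •
    (deriv (deriv γ) s -
      (Complex.normSq (deriv γ s))⁻¹ •
        ((deriv (deriv γ) s * star (deriv γ s)).re : ℝ) • deriv γ s)

/-- The normal projection of the position vector of a regular curve `γ : ℝ → ℂ`:
`γ⊥ = γ − |γ_s|⁻²·⟨γ,γ_s⟩·γ_s` with `⟨a,b⟩ = Re(a·conj b)`. -/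
noncomputable def perpVec (γ : ℝ → ℂ) (s : ℝ) : ℂ :=
  γ s - (Complex.normSq (deriv γ s))⁻¹ • ((γ s * star (deriv γ s)).re : ℝ) • deriv γ s

lemma deriv_scale (γ : ℝ → ℂ) (c : ℂ) :
    deriv (fun σ => c * γ σ) = fun σ => c * deriv γ σ := by
  funext s; exact deriv_const_mul_field c

lemma normSq_scale (c : ℝ) (z : ℂ) :
    Complex.normSq ((c:ℂ) * z) = c^2 * Complex.normSq z := by
  simp [Complex.normSq_mul, Complex.normSq_ofReal, sq]

lemma re_scale (c : ℝ) (a b : ℂ) :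
    ((c:ℂ) * a * star ((c:ℂ) * b)).re = c^2 * (a * star b).re := by
  have h : (c:ℂ) * a * star ((c:ℂ) * b) = ((c^2 : ℝ) : ℂ) * (a * star b) := by
    simp [Complex.star_def, map_mul, Complex.conj_ofReal]; ring
  rw [h, Complex.re_ofReal_mul]

lemma perp_scale (γ : ℝ → ℂ) (c : ℝ) (hc : c ≠ 0) (s : ℝ) :
    perpVec (fun σ => (c:ℂ) * γ σ) s = (c:ℂ) * perpVec γ s := by
  unfold perpVec
  rw [deriv_scale, normSq_scale, re_scale]
  have hc' : (c:ℂ) ≠ 0 := by exact_mod_cast hc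
  have hcc : ((c:ℂ)^2)⁻¹ * (c:ℂ)^2 = 1 := inv_mul_cancel₀ (pow_ne_zero 2 hc')
  simp only [Complex.real_smul]
  push_cast [mul_inv]
  linear_combination (-(↑c * ((Complex.normSq (deriv γ s) : ℝ):ℂ)⁻¹ *
    (((γ s * star (deriv γ s)).re : ℝ) : ℂ) * deriv γ s)) * hcc

lemma curv_scale (γ : ℝ → ℂ) (c : ℝ) (hc : c ≠ 0) (s : ℝ) :
    curvVec (fun σ => (c:ℂ) * γ σ) s = (c:ℂ)⁻¹ * curvVec γ s := by
  unfold curvVec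
  rw [deriv_scale, deriv_scale, normSq_scale, re_scale]
  have hc' : (c:ℂ) ≠ 0 := by exact_mod_cast hc
  have hc1 : (c:ℂ)⁻¹ * (c:ℂ) = 1 := inv_mul_cancel₀ hc'
  simp only [Complex.real_smul]
  push_cast [mul_inv]
  set N := ((Complex.normSq (deriv γ s) : ℝ) : ℂ)
  set R := (((deriv (deriv γ) s * star (deriv γ s)).re : ℝ) : ℂ)
  set D := deriv γ s
  set DD := deriv (deriv γ) s
  linear_combination ((c:ℂ)⁻¹*N⁻¹*DD - (c:ℂ)⁻¹*N⁻¹^2*R*D*((c:ℂ)⁻¹^2*(c:ℂ)^2 + (c:ℂ)⁻¹*(c:ℂ) + 1)) * hc1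

/-- If a regular twice-differentiable curve `γ₀ : I → ℂ∖{0}` satisfies the soliton equation
`κ₀ − γ₀⊥/|γ₀|² = λ·γ₀⊥`, then `γ(s,t) = √(1+2λt)·γ₀(s)` solves the equivariant Lagrangian
mean curvature flow up to tangential motion: the projection of `∂γ/∂t` orthogonal to the
tangent direction `γ_s` equals `κ − γ⊥/|γ|²`.  For `λ > 0` these are Anciaux's
self-expanders, for `λ < 0` self-shrinkers. -/
theorem soliton_dilation_solves_LMCF_up_to_tangential (I : Set ℝ) (hI : IsOpen I)
    (γ₀ : ℝ → ℂ) (lam : ℝ)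
    (hsm : ContDiffOn ℝ 2 γ₀ I)
    (hreg : ∀ s ∈ I, deriv γ₀ s ≠ 0)
    (hne : ∀ s ∈ I, γ₀ s ≠ 0)
    (hsol : ∀ s ∈ I,
      curvVec γ₀ s - perpVec γ₀ s / (Complex.normSq (γ₀ s) : ℂ)
        = (lam : ℂ) * perpVec γ₀ s) :
    ∀ s ∈ I, ∀ t : ℝ, 0 < 1 + 2 * lam * t →
      deriv (fun τ : ℝ => (Real.sqrt (1 + 2 * lam * τ) : ℂ) * γ₀ s) t
        - (Complex.normSq
              (deriv (fun σ : ℝ => (Real.sqrt (1 + 2 * lam * t) : ℂ) * γ₀ σ) s))⁻¹ •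
            ((deriv (fun τ : ℝ => (Real.sqrt (1 + 2 * lam * τ) : ℂ) * γ₀ s) t *
                star (deriv (fun σ : ℝ => (Real.sqrt (1 + 2 * lam * t) : ℂ) * γ₀ σ) s)).re : ℝ) •
            deriv (fun σ : ℝ => (Real.sqrt (1 + 2 * lam * t) : ℂ) * γ₀ σ) s
      = curvVec (fun σ : ℝ => (Real.sqrt (1 + 2 * lam * t) : ℂ) * γ₀ σ) s
        - perpVec (fun σ : ℝ => (Real.sqrt (1 + 2 * lam * t) : ℂ) * γ₀ σ) s /
            (Complex.normSq ((Real.sqrt (1 + 2 * lam * t) : ℂ) * γ₀ s) : ℂ) := by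
  intro s hs t ht
  set c : ℝ := Real.sqrt (1 + 2 * lam * t) with hcdef
  have hcpos : 0 < c := Real.sqrt_pos.mpr ht
  have hc : c ≠ 0 := ne_of_gt hcpos
  have hc' : (c:ℂ) ≠ 0 := by exact_mod_cast hc
  -- time derivative
  have hder : HasDerivAt (fun τ : ℝ => (Real.sqrt (1 + 2 * lam * τ) : ℂ) * γ₀ s)
      (((lam / c : ℝ) : ℂ) * γ₀ s) t := by
    have h1 : HasDerivAt (fun τ : ℝ => 1 + 2 * lam * τ) (2 * lam) t := by
      simpa using ((hasDerivAt_id t).const_mul (2 * lam)).const_add 1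
    have h2 := (Real.hasDerivAt_sqrt (ne_of_gt ht)).comp t h1
    have h3 : HasDerivAt (fun τ : ℝ => Real.sqrt (1 + 2 * lam * τ)) (lam / c) t := by
      refine h2.congr_deriv ?_
      rw [← hcdef]
      field_simp
    exact (h3.ofReal_comp).mul_const (γ₀ s)
  rw [hder.deriv, deriv_scale γ₀ (c:ℂ), curv_scale γ₀ c hc, perp_scale γ₀ c hc, normSq_scale c (deriv γ₀ s), normSq_scale c (γ₀ s)]
  simp only []
  have hsol' := hsol s hs
  have hn : Complex.normSq (deriv γ₀ s) ≠ 0 := (Complex.normSq_pos.mpr (hreg s hs)).ne'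
  have hn' : (Complex.normSq (deriv γ₀ s) : ℂ) ≠ 0 := by exact_mod_cast hn
  have hg : (Complex.normSq (γ₀ s) : ℂ) ≠ 0 := by
    exact_mod_cast (Complex.normSq_pos.mpr (hne s hs)).ne'
  -- LHS reduces to (lam/c) • perpVec γ₀ s
  have key : ((lam / c : ℝ) : ℂ) * γ₀ s
      - (c^2 * Complex.normSq (deriv γ₀ s))⁻¹ •
          ((((lam / c : ℝ) : ℂ) * γ₀ s * star ((c:ℂ) * deriv γ₀ s)).re : ℝ) •
          ((c:ℂ) * deriv γ₀ s)
      = ((lam / c : ℝ) : ℂ) * perpVec γ₀ s := by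
    unfold perpVec
    have hre : (((lam / c : ℝ) : ℂ) * γ₀ s * star ((c:ℂ) * deriv γ₀ s)).re
        = (lam / c) * c * (γ₀ s * star (deriv γ₀ s)).re := by
      have h : ((lam / c : ℝ) : ℂ) * γ₀ s * star ((c:ℂ) * deriv γ₀ s)
          = (((lam / c) * c : ℝ) : ℂ) * (γ₀ s * star (deriv γ₀ s)) := by
        simp [Complex.star_def, map_mul, Complex.conj_ofReal]; push_cast; ring
      rw [h, Complex.re_ofReal_mul]
    rw [hre]
    simp only [Complex.real_smul]
    push_cast [mul_inv]
    field_simp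
  rw [key]
  have h2 : (c:ℂ) * perpVec γ₀ s / ((c^2 * Complex.normSq (γ₀ s) : ℝ) : ℂ)
      = (c:ℂ)⁻¹ * (perpVec γ₀ s / (Complex.normSq (γ₀ s) : ℂ)) := by
    push_cast
    field_simp
  rw [h2, ← mul_sub, hsol']
  push_cast
  field_simp
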